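/- Let S = ⟨qm₁,…,qm_d, pn₁,…,pn_k⟩ be a specific gluing of S₁ and S₂. Then ord_S(qx) = ord_{S₁}(x) for every x∈S₁. -/

import Mathlib

open scoped Pointwise

/-- `S ⊆ ℕ` is a numerical semigroup: it contains `0`, is closed under
addition, and has finite complement in `ℕ`. -/
def IsNumSgp (S : Set ℕ) : Prop :=
  (0 : ℕ) ∈ S ∧ (∀ a ∈ S, ∀ b ∈ S, a + b ∈ S) ∧ {x : ℕ | x ∉ S}.Finite

/-- `nM S t` is the `t`-fold sumset of the maximal ideal `M = S \ {0}`,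
with the convention `nM S 0 = S`. -/
def nM (S : Set ℕ) : ℕ → Set ℕ
  | 0 => S
  | t + 1 => (S \ {0}) + nM S t

/-- the order of `s` with respect to `S` : the largest `t` with `s ∈ tM`. -/
noncomputable def ordS (S : Set ℕ) (s : ℕ) : ℕ := sSup {t : ℕ | s ∈ nM S t}

/-- the multiplicity of `S` : its least nonzero element. -/
noncomputable def mult (S : Set ℕ) : ℕ := sInf {x : ℕ | x ∈ S ∧ x ≠ 0}

/-- the Apéry set of `S` with respect to `x` : elements `s ∈ S` with `s - x ∉ S`. -/
def Ap (S : Set ℕ) (x : ℕ) : Set ℕ := {s : ℕ | s ∈ S ∧ ¬ ∃ t ∈ S, s = t + x}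

/-- membership of an integer in (the image in `ℤ` of) `S`. -/
def zmem (S : Set ℕ) (z : ℤ) : Prop := ∃ t ∈ S, (t : ℤ) = z

/-- the Frobenius number of `S` : the largest integer not in `S`. -/
noncomputable def Frob (S : Set ℕ) : ℤ := sSup {z : ℤ | ¬ zmem S z}

/-- `S` is symmetric: for every integer `z`, `z ∈ S` iff `F(S) - z ∉ S`. -/
def IsSymmetric (S : Set ℕ) : Prop := ∀ z : ℤ, zmem S z ↔ ¬ zmem S (Frob S - z)

/-- the set of maximal elements of `Ap S x` with respect to the order
`u ⪯ v` iff `v = u + z` for some `z ∈ S`. -/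
def MaxAp (S : Set ℕ) (x : ℕ) : Set ℕ :=
  {w : ℕ | w ∈ Ap S x ∧ ∀ y ∈ Ap S x, (∃ z ∈ S, y = w + z) → y = w}

/-- the set of maximal elements of `Ap S x` with respect to the order
`u ⪯_M v` iff `v = u + z` for some `z ∈ S` with `ord(v) = ord(u) + ord(z)`. -/
def MaxMAp (S : Set ℕ) (x : ℕ) : Set ℕ :=
  {w : ℕ | w ∈ Ap S x ∧ ∀ y ∈ Ap S x,
    (∃ z ∈ S, y = w + z ∧ ordS S y = ordS S w + ordS S z) → y = w}

/-- `S` is M-pure with respect to `x` : all maximal elements of `Ap S x`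
under `⪯_M` have the same order. -/
def MPureWrt (S : Set ℕ) (x : ℕ) : Prop :=
  ∀ w ∈ MaxMAp S x, ∀ w' ∈ MaxMAp S x, ordS S w = ordS S w'

/-- `S` is M-pure : it is M-pure with respect to its multiplicity. -/
def MPure (S : Set ℕ) : Prop := MPureWrt S (mult S)

/-- `β_i(x)` : the number of elements of `Ap S x` of order `i`. -/
noncomputable def betaS (S : Set ℕ) (x i : ℕ) : ℕ := {w ∈ Ap S x | ordS S w = i}.ncard

/-- `d(x)` : the maximal order of an element of `Ap S x`. -/
noncomputable def dS (S : Set ℕ) (x : ℕ) : ℕ := sSup (ordS S '' Ap S x)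

/-- the reduction number of `S` : the least `r` with `(r+1)M = m(S) + rM`. -/
noncomputable def redNum (S : Set ℕ) : ℕ :=
  sInf {r : ℕ | nM S (r + 1) = (fun y => mult S + y) '' nM S r}

/-- `l_x(S) = max { ord(s+x) - ord(x) - ord(s) : s ∈ S, ord(s) ≤ r }`. -/
noncomputable def lS (S : Set ℕ) (x : ℕ) : ℕ :=
  sSup {t : ℕ | ∃ s ∈ S, ordS S s ≤ redNum S ∧ t = ordS S (s + x) - ordS S x - ordS S s}

/-- the Hilbert function of `S`. -/
noncomputable def HilbS (S : Set ℕ) (t : ℕ) : ℕ := (nM S t \ nM S (t + 1)).ncard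

/-- The data of a gluing `S = ⟨q m₁, …, q m_d, p n₁, …, p n_k⟩` of two numerical
semigroups `S₁ = ⟨m₁, …, m_d⟩` and `S₂ = ⟨n₁, …, n_k⟩`, minimally generated by
`m₁ < ⋯ < m_d` and `n₁ < ⋯ < n_k`, where `p ∈ S₁ \ {m₁, …, m_d}`,
`q ∈ S₂ \ {n₁, …, n_k}` and `gcd(p, q) = 1`. -/
structure Gluing where
  d : ℕ
  k : ℕ
  hd : 0 < d
  hk : 0 < k
  m : Fin d → ℕ
  n : Fin k → ℕ
  p : ℕ
  q : ℕ
  hm : StrictMono m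
  hn : StrictMono n
  hmin₁ : ∀ i, m i ∉ AddSubmonoid.closure (Set.range m \ {m i})
  hmin₂ : ∀ j, n j ∉ AddSubmonoid.closure (Set.range n \ {n j})
  hnum₁ : IsNumSgp (AddSubmonoid.closure (Set.range m) : Set ℕ)
  hnum₂ : IsNumSgp (AddSubmonoid.closure (Set.range n) : Set ℕ)
  hp : p ∈ AddSubmonoid.closure (Set.range m)
  hq : q ∈ AddSubmonoid.closure (Set.range n)
  hpm : p ∉ Set.range m
  hqn : q ∉ Set.range n
  hpq : Nat.gcd p q = 1

/-- the numerical semigroup `S₁ = ⟨m₁, …, m_d⟩`. -/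
def Gluing.S₁ (G : Gluing) : Set ℕ := (AddSubmonoid.closure (Set.range G.m) : Set ℕ)

/-- the numerical semigroup `S₂ = ⟨n₁, …, n_k⟩`. -/
def Gluing.S₂ (G : Gluing) : Set ℕ := (AddSubmonoid.closure (Set.range G.n) : Set ℕ)

/-- the glued numerical semigroup `S = ⟨q m₁, …, q m_d, p n₁, …, p n_k⟩`. -/
def Gluing.S (G : Gluing) : Set ℕ :=
  (AddSubmonoid.closure
    ((fun x => G.q * x) '' Set.range G.m ∪ (fun x => G.p * x) '' Set.range G.n) : Set ℕ)

/-- the smallest generator `m₁` of `S₁`. -/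
def Gluing.m₁ (G : Gluing) : ℕ := G.m ⟨0, G.hd⟩

/-- the smallest generator `n₁` of `S₂`. -/
def Gluing.n₁ (G : Gluing) : ℕ := G.n ⟨0, G.hk⟩

/-- the gluing is specific if `ord_{S₂}(q) + l_q(S₂) ≤ ord_{S₁}(p)`. -/
def Gluing.Specific (G : Gluing) : Prop := ordS G.S₂ G.q + lS G.S₂ G.q ≤ ordS G.S₁ G.p

/-- the gluing is nice if `q = a n₁` for some `1 < a ≤ ord_{S₁}(p)`. -/
def Gluing.Nice (G : Gluing) : Prop := ∃ a : ℕ, 1 < a ∧ a ≤ ordS G.S₁ G.p ∧ G.q = a * G.n₁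

section General

variable {S : Set ℕ}

lemma mem_nM_succ {s t : ℕ} :
    s ∈ nM S (t + 1) ↔ ∃ z ∈ S \ ({0} : Set ℕ), ∃ y ∈ nM S t, z + y = s := by
  show s ∈ (S \ {0}) + nM S t ↔ _
  exact Set.mem_add

lemma nM_subset (hS : IsNumSgp S) : ∀ t, nM S t ⊆ S
  | 0 => fun _ h => h
  | t + 1 => fun s hs => by
      obtain ⟨z, hz, y, hy, rfl⟩ := mem_nM_succ.mp hs
      exact hS.2.1 z hz.1 y (nM_subset hS t hy)

lemma add_mem_nM (hS : IsNumSgp S) : ∀ t, ∀ a ∈ S, ∀ y ∈ nM S t, a + y ∈ nM S t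
  | 0 => fun a ha y hy => hS.2.1 a ha y hy
  | t + 1 => fun a ha y hy => by
      obtain ⟨z, hz, y', hy', rfl⟩ := mem_nM_succ.mp hy
      rw [← add_assoc, add_comm a z, add_assoc]
      exact mem_nM_succ.mpr ⟨z, hz, a + y', add_mem_nM hS t a ha y' hy', rfl⟩

lemma nM_add_nM (hS : IsNumSgp S) :
    ∀ a b x y, x ∈ nM S a → y ∈ nM S b → x + y ∈ nM S (a + b)
  | 0, b => fun x y hx hy => by
      simpa [Nat.zero_add] using add_mem_nM hS b x hx y hy
  | a + 1, b => fun x y hx hy => by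
      obtain ⟨z, hz, x', hx', rfl⟩ := mem_nM_succ.mp hx
      have : a + 1 + b = (a + b) + 1 := by omega
      rw [this]
      exact mem_nM_succ.mpr ⟨z, hz, x' + y, nM_add_nM hS a b x' y hx' hy, (add_assoc z x' y).symm⟩

lemma mult_mem (hS : IsNumSgp S) : mult S ∈ S ∧ mult S ≠ 0 := by
  have hne : {x : ℕ | x ∈ S ∧ x ≠ 0}.Nonempty := by
    obtain ⟨a, ha⟩ := (hS.2.2.union (Set.finite_singleton 0)).exists_notMem
    simp only [Set.mem_union, Set.mem_setOf_eq, Set.mem_singleton_iff, not_or, not_not] at ha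
    exact ⟨a, ha.1, ha.2⟩
  exact Nat.sInf_mem hne

lemma mult_le (hS : IsNumSgp S) {x : ℕ} (hx : x ∈ S) (h0 : x ≠ 0) : mult S ≤ x :=
  Nat.sInf_le ⟨hx, h0⟩

lemma one_le_mult (hS : IsNumSgp S) : 1 ≤ mult S :=
  Nat.one_le_iff_ne_zero.mpr (mult_mem hS).2

lemma le_of_mem_nM : ∀ t (s : ℕ), s ∈ nM S t → t ≤ s
  | 0 => fun s _ => Nat.zero_le _
  | t + 1 => fun s hs => by
      obtain ⟨z, hz, y, hy, rfl⟩ := mem_nM_succ.mp hs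
      have h1 : 1 ≤ z := Nat.one_le_iff_ne_zero.mpr hz.2
      have h2 := le_of_mem_nM t y hy
      omega

lemma bddAbove_ordSet (s : ℕ) : BddAbove {t : ℕ | s ∈ nM S t} :=
  ⟨s, fun t ht => le_of_mem_nM t _ ht⟩

lemma le_ordS {s t : ℕ} (h : s ∈ nM S t) : t ≤ ordS S s :=
  le_csSup (bddAbove_ordSet s) h

lemma mem_nM_ordS {s : ℕ} (hs : s ∈ S) : s ∈ nM S (ordS S s) :=
  Nat.sSup_mem (s := {t : ℕ | s ∈ nM S t}) ⟨0, hs⟩ (bddAbove_ordSet s)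

lemma ordS_le_self (s : ℕ) : ordS S s ≤ s :=
  csSup_le' (fun t ht => le_of_mem_nM t _ ht)

lemma ordS_zero (hS : IsNumSgp S) : ordS S 0 = 0 := by
  apply Nat.le_antisymm _ (Nat.zero_le _)
  apply csSup_le'
  intro t ht
  have := le_of_mem_nM t _ ht
  omega

lemma ordS_superadd (hS : IsNumSgp S) {x y : ℕ} (hx : x ∈ S) (hy : y ∈ S) :
    ordS S x + ordS S y ≤ ordS S (x + y) :=
  le_ordS (nM_add_nM hS _ _ _ _ (mem_nM_ordS hx) (mem_nM_ordS hy))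

lemma exists_conductor (hS : IsNumSgp S) : ∃ c : ℕ, 1 ≤ c ∧ ∀ y, c ≤ y → y ∈ S := by
  obtain ⟨B, hB⟩ := hS.2.2.bddAbove
  refine ⟨B + 1, by omega, fun y hy => ?_⟩
  by_contra h
  have := hB h
  omega

lemma big_mem_nM (hS : IsNumSgp S) {c : ℕ} (hc : ∀ y, c ≤ y → y ∈ S) :
    ∀ t y, t * mult S + c ≤ y → y ∈ nM S t
  | 0 => fun y hy => hc y (by omega)
  | t + 1 => fun y hy => by
      have he := one_le_mult hS
      have h1 : (t + 1) * mult S = mult S + t * mult S := by ring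
      have h2 : t * mult S + c ≤ y - mult S := by omega
      have h3 : y = mult S + (y - mult S) := by omega
      rw [h3]
      exact mem_nM_succ.mpr ⟨mult S, ⟨(mult_mem hS).1, (mult_mem hS).2⟩,
        y - mult S, big_mem_nM hS hc t _ h2, rfl⟩

lemma nM_dichotomy (hS : IsNumSgp S) :
    ∀ t (s : ℕ), s ∈ nM S (t + 1) →
      (∃ y ∈ nM S t, s = mult S + y) ∨ (t + 1) * (mult S + 1) ≤ s
  | 0 => fun s hs => by
      obtain ⟨z, hz, y, hy, rfl⟩ := mem_nM_succ.mp hs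
      rcases eq_or_ne z (mult S) with h | h
      · exact Or.inl ⟨y, hy, by omega⟩
      · have h1 : mult S ≤ z := mult_le hS hz.1 hz.2
        right; omega
  | t + 1 => fun s hs => by
      obtain ⟨z, hz, y, hy, rfl⟩ := mem_nM_succ.mp hs
      rcases nM_dichotomy hS t _ hy with ⟨y', hy', rfl⟩ | hbig
      · left
        exact ⟨z + y', mem_nM_succ.mpr ⟨z, hz, y', hy', rfl⟩, by omega⟩
      · rcases eq_or_ne z (mult S) with h | h
        · exact Or.inl ⟨y, hy, by omega⟩
        · have h1 : mult S ≤ z := mult_le hS hz.1 hz.2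
          right
          have : (t + 1 + 1) * (mult S + 1) = (t + 1) * (mult S + 1) + (mult S + 1) := by ring
          omega

lemma redNum_mem (hS : IsNumSgp S) :
    nM S (redNum S + 1) = (fun y => mult S + y) '' nM S (redNum S) := by
  obtain ⟨c, hc1, hc⟩ := exists_conductor hS
  have hne : {r : ℕ | nM S (r + 1) = (fun y => mult S + y) '' nM S r}.Nonempty := by
    refine ⟨c, Set.Subset.antisymm ?_ ?_⟩
    · intro s hs
      rcases nM_dichotomy hS c _ hs with ⟨y, hy, rfl⟩ | hbig
      · exact ⟨y, hy, rfl⟩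
      · have he := one_le_mult hS
        have hexp : (c + 1) * (mult S + 1) = c * mult S + c + mult S + 1 := by ring
        have h2 : c * mult S + c ≤ s - mult S := by omega
        refine ⟨s - mult S, big_mem_nM hS hc c _ h2, ?_⟩
        simp only
        omega
    · rintro s ⟨y, hy, rfl⟩
      exact mem_nM_succ.mpr ⟨mult S, ⟨(mult_mem hS).1, (mult_mem hS).2⟩, y, hy, rfl⟩
  exact Nat.sInf_mem hne

lemma redNum_step (hS : IsNumSgp S) :
    ∀ t, redNum S ≤ t → nM S (t + 1) = (fun y => mult S + y) '' nM S t := by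
  intro t ht
  induction t, ht using Nat.le_induction with
  | base => exact redNum_mem hS
  | succ t ht ih =>
    ext s
    constructor
    · intro hs
      obtain ⟨z, hz, y, hy, rfl⟩ := mem_nM_succ.mp hs
      rw [ih] at hy
      obtain ⟨y', hy', rfl⟩ := hy
      exact ⟨z + y', mem_nM_succ.mpr ⟨z, hz, y', hy', rfl⟩, by simp; omega⟩
    · rintro ⟨y, hy, rfl⟩
      exact mem_nM_succ.mpr ⟨mult S, ⟨(mult_mem hS).1, (mult_mem hS).2⟩, y, hy, rfl⟩

lemma ordS_mult_add (hS : IsNumSgp S) {y : ℕ} (hy : y ∈ S)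
    (hr : redNum S ≤ ordS S y) : ordS S (mult S + y) = ordS S y + 1 := by
  have hge : ordS S y + 1 ≤ ordS S (mult S + y) :=
    le_ordS (mem_nM_succ.mpr ⟨mult S, ⟨(mult_mem hS).1, (mult_mem hS).2⟩,
      y, mem_nM_ordS hy, rfl⟩)
  refine Nat.le_antisymm ?_ hge
  set T := ordS S (mult S + y) with hT
  have hTmem : mult S + y ∈ nM S T :=
    mem_nM_ordS (hS.2.1 _ (mult_mem hS).1 _ hy)
  have hT1 : redNum S + 1 ≤ T := by omega
  have hstep := redNum_step hS (T - 1) (by omega)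
  rw [show T = (T - 1) + 1 by omega, hstep] at hTmem
  obtain ⟨y', hy', heq⟩ := hTmem
  have heq2 : mult S + y' = mult S + y := heq
  have : y' = y := by omega
  subst this
  have := le_ordS hy'
  omega

lemma nM_decompose (hS : IsNumSgp S) :
    ∀ j (s : ℕ), s ∈ nM S (redNum S + j) →
      ∃ s' ∈ nM S (redNum S), s = j * mult S + s'
  | 0 => fun s hs => ⟨s, hs, by omega⟩
  | j + 1 => fun s hs => by
      rw [show redNum S + (j + 1) = (redNum S + j) + 1 by omega,
        redNum_step hS _ (by omega)] at hs
      obtain ⟨y, hy, rfl⟩ := hs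
      obtain ⟨s', hs', rfl⟩ := nM_decompose hS j _ hy
      exact ⟨s', hs', by ring⟩

lemma mul_mem_S (hS : IsNumSgp S) {x : ℕ} (hx : x ∈ S) : ∀ w, x * w ∈ S
  | 0 => by simpa using hS.1
  | w + 1 => by
      rw [Nat.mul_succ]
      exact hS.2.1 _ (mul_mem_S hS hx w) _ hx

lemma ord_mul_ge (hS : IsNumSgp S) {x : ℕ} (hx : x ∈ S) :
    ∀ w, w * ordS S x ≤ ordS S (x * w)
  | 0 => by simp
  | w + 1 => by
      rw [Nat.mul_succ]
      have h1 := ordS_superadd hS (mul_mem_S hS hx w) hx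
      have h2 := ord_mul_ge hS hx w
      have : (w + 1) * ordS S x = w * ordS S x + ordS S x := by ring
      omega

lemma smul_mult_mem_nM (hS : IsNumSgp S) : ∀ j, j * mult S ∈ nM S j
  | 0 => by simp only [Nat.zero_mul]; exact hS.1
  | j + 1 => by
      have : (j + 1) * mult S = mult S + j * mult S := by ring
      rw [this]
      exact mem_nM_succ.mpr ⟨mult S, ⟨(mult_mem hS).1, (mult_mem hS).2⟩,
        _, smul_mult_mem_nM hS j, rfl⟩

lemma ordS_smul_mult_add (hS : IsNumSgp S) {y : ℕ} (hy : y ∈ S)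
    (hr : redNum S ≤ ordS S y) :
    ∀ j, ordS S (j * mult S + y) = ordS S y + j
  | 0 => by simp
  | j + 1 => by
      have ih := ordS_smul_mult_add hS hy hr j
      have hmem : j * mult S + y ∈ S := by
        have := hS.2.1 _ (mul_mem_S hS (mult_mem hS).1 j) _ hy
        rwa [mul_comm] at this
      have h2 : ordS S (mult S + (j * mult S + y)) = ordS S (j * mult S + y) + 1 :=
        ordS_mult_add hS hmem (by omega)
      have h3 : (j + 1) * mult S + y = mult S + (j * mult S + y) := by ring
      rw [h3, h2, ih]
      omega

lemma bddAbove_lSet (hS : IsNumSgp S) (x : ℕ) :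
    BddAbove {t : ℕ | ∃ s ∈ S, ordS S s ≤ redNum S ∧
      t = ordS S (s + x) - ordS S x - ordS S s} := by
  obtain ⟨c, hc1, hc⟩ := exists_conductor hS
  refine ⟨(redNum S + 1) * mult S + c + x, ?_⟩
  rintro t ⟨s, hs, hord, rfl⟩
  have hsmall : s < (redNum S + 1) * mult S + c := by
    by_contra h
    have := le_ordS (big_mem_nM hS hc (redNum S + 1) s (by omega))
    omega
  have := ordS_le_self (S := S) (s + x)
  omega

lemma lS_witness (hS : IsNumSgp S) {s : ℕ} (x : ℕ) (hs : s ∈ S)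
    (hord : ordS S s ≤ redNum S) :
    ordS S (s + x) ≤ ordS S s + ordS S x + lS S x := by
  have h := le_csSup (bddAbove_lSet hS x) ⟨s, hs, hord, rfl⟩
  have : ordS S (s + x) - ordS S x - ordS S s ≤ lS S x := h
  omega

lemma ordS_add_le (hS : IsNumSgp S) {s x : ℕ} (hs : s ∈ S) (hx : x ∈ S) :
    ordS S (s + x) ≤ ordS S s + ordS S x + lS S x := by
  by_cases h : ordS S s ≤ redNum S
  · exact lS_witness hS x hs h
  · push_neg at h
    set n := ordS S s with hn
    have hmem : s ∈ nM S (redNum S + (n - redNum S)) := by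
      rw [show redNum S + (n - redNum S) = n by omega]
      exact mem_nM_ordS hs
    obtain ⟨s', hs', heq⟩ := nM_decompose hS (n - redNum S) _ hmem
    have hs'S : s' ∈ S := nM_subset hS _ hs'
    have hords' : ordS S s' = redNum S := by
      have h1 : redNum S ≤ ordS S s' := le_ordS hs'
      have h2 : (n - redNum S) + ordS S s' ≤ n := by
        have h3 := le_ordS (nM_add_nM hS _ _ _ _
          (smul_mult_mem_nM hS (n - redNum S)) (mem_nM_ordS hs'S))
        rw [← heq] at h3
        omega
      omega
    have hkey : ordS S (s' + x) ≤ redNum S + ordS S x + lS S x := by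
      have := lS_witness hS x hs'S (le_of_eq hords')
      omega
    have hrle : redNum S ≤ ordS S (s' + x) := by
      have := ordS_superadd hS hs'S hx
      omega
    have hfin : ordS S ((n - redNum S) * mult S + (s' + x)) =
        ordS S (s' + x) + (n - redNum S) :=
      ordS_smul_mult_add hS (hS.2.1 _ hs'S _ hx) hrle _
    have harr : s + x = (n - redNum S) * mult S + (s' + x) := by omega
    rw [harr, hfin]
    omega

lemma ordS_mul_le (hS : IsNumSgp S) {x : ℕ} (hx : x ∈ S) :
    ∀ w, ordS S (x * w) ≤ w * (ordS S x + lS S x)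
  | 0 => by simpa using le_of_eq (ordS_zero hS)
  | w + 1 => by
      rw [Nat.mul_succ]
      have h1 := ordS_add_le hS (mul_mem_S hS hx w) hx
      have h2 := ordS_mul_le hS hx w
      have : (w + 1) * (ordS S x + lS S x) =
          w * (ordS S x + lS S x) + ordS S x + lS S x := by ring
      omega

end General
section GluingLemmas

lemma gen_pos (G : Gluing) (i : Fin G.d) : 0 < G.m i := by
  rcases Nat.eq_zero_or_pos (G.m i) with h | h
  · exfalso
    apply G.hmin₁ i
    rw [h]
    exact AddSubmonoid.zero_mem _
  · exact h

lemma gen_pos' (G : Gluing) (j : Fin G.k) : 0 < G.n j := by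
  rcases Nat.eq_zero_or_pos (G.n j) with h | h
  · exfalso
    apply G.hmin₂ j
    rw [h]
    exact AddSubmonoid.zero_mem _
  · exact h

lemma one_mem_range {d : ℕ} {f : Fin d → ℕ}
    (h : (1 : ℕ) ∈ AddSubmonoid.closure (Set.range f)) : 1 ∈ Set.range f := by
  have key : ∀ x, x ∈ AddSubmonoid.closure (Set.range f) → x = 1 → x ∈ Set.range f := by
    intro x hx
    induction hx using AddSubmonoid.closure_induction with
    | mem x hx => exact fun _ => hx
    | zero => omega
    | add a b ha hb iha ihb =>
      intro hab
      have : (a = 1 ∧ b = 0) ∨ (a = 0 ∧ b = 1) := by omega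
      rcases this with ⟨h1, h2⟩ | ⟨h1, h2⟩
      · simpa [h2] using iha h1
      · simpa [h1] using ihb h2
  exact key 1 h rfl

lemma Gluing.q_pos (G : Gluing) : 0 < G.q := by
  rcases Nat.eq_zero_or_pos G.q with h | h
  · exfalso
    have hp1 : G.p = 1 := by
      have := G.hpq
      rw [h] at this
      simpa using this
    apply G.hpm
    rw [hp1]
    exact one_mem_range (hp1 ▸ G.hp)
  · exact h

lemma Gluing.mem_S_iff (G : Gluing) {s : ℕ} :
    s ∈ G.S ↔ ∃ u ∈ G.S₁, ∃ v ∈ G.S₂, G.q * u + G.p * v = s := by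
  have h1 : AddSubmonoid.closure ((fun x => G.q * x) '' Set.range G.m) =
      AddSubmonoid.map (AddMonoidHom.mulLeft G.q) (AddSubmonoid.closure (Set.range G.m)) := by
    rw [AddMonoidHom.map_mclosure]
    simp [AddMonoidHom.mulLeft]
  have h2 : AddSubmonoid.closure ((fun x => G.p * x) '' Set.range G.n) =
      AddSubmonoid.map (AddMonoidHom.mulLeft G.p) (AddSubmonoid.closure (Set.range G.n)) := by
    rw [AddMonoidHom.map_mclosure]
    simp [AddMonoidHom.mulLeft]
  show s ∈ (AddSubmonoid.closure (_ ∪ _) : AddSubmonoid ℕ) ↔ _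
  rw [AddSubmonoid.closure_union, h1, h2, AddSubmonoid.mem_sup]
  constructor
  · rintro ⟨y, hy, z, hz, rfl⟩
    obtain ⟨u, hu, rfl⟩ := hy
    obtain ⟨v, hv, rfl⟩ := hz
    exact ⟨u, hu, v, hv, rfl⟩
  · rintro ⟨u, hu, v, hv, rfl⟩
    exact ⟨G.q * u, ⟨u, hu, rfl⟩, G.p * v, ⟨v, hv, rfl⟩, rfl⟩

lemma Gluing.q_mul_mem_nM (G : Gluing) :
    ∀ t (x : ℕ), x ∈ nM G.S₁ t → G.q * x ∈ nM G.S t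
  | 0 => fun x hx => G.mem_S_iff.mpr ⟨x, hx, 0, AddSubmonoid.zero_mem _, by ring⟩
  | t + 1 => fun x hx => by
      obtain ⟨z, hz, y, hy, rfl⟩ := mem_nM_succ.mp hx
      rw [Nat.mul_add]
      refine mem_nM_succ.mpr ⟨G.q * z, ⟨?_, ?_⟩, G.q * y, Gluing.q_mul_mem_nM G t _ hy, rfl⟩
      · exact G.mem_S_iff.mpr ⟨z, hz.1, 0, AddSubmonoid.zero_mem _, by ring⟩
      · have h1 : z ≠ 0 := hz.2
        have h2 := G.q_pos
        simp only [Set.mem_singleton_iff]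
        positivity

lemma Gluing.nM_S_decompose (G : Gluing) :
    ∀ T (s : ℕ), s ∈ nM G.S T →
      ∃ a b u v, u ∈ nM G.S₁ a ∧ v ∈ nM G.S₂ b ∧ s = G.q * u + G.p * v ∧ T ≤ a + b
  | 0 => fun s hs => by
      obtain ⟨u, hu, v, hv, rfl⟩ := G.mem_S_iff.mp hs
      exact ⟨0, 0, u, v, hu, hv, rfl, by omega⟩
  | T + 1 => fun s hs => by
      obtain ⟨z, hz, y, hy, rfl⟩ := mem_nM_succ.mp hs
      obtain ⟨a, b, u, v, hu, hv, rfl, hab⟩ := Gluing.nM_S_decompose G T _ hy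
      obtain ⟨u', hu', v', hv', rfl⟩ := G.mem_S_iff.mp hz.1
      have hz0 : G.q * u' + G.p * v' ≠ 0 := hz.2
      rcases Nat.eq_zero_or_pos (G.q * u') with hqu | hqu
      · -- then p * v' ≠ 0, so v' ≠ 0
        have hv'0 : v' ≠ 0 := by
          intro h
          rw [h] at hz0
          omega
        refine ⟨a, b + 1, u' + u, v' + v, ?_, ?_, by ring, by omega⟩
        · exact add_mem_nM G.hnum₁ a u' hu' u hu
        · exact mem_nM_succ.mpr ⟨v', ⟨hv', hv'0⟩, v, hv, rfl⟩
      · have hu'0 : u' ≠ 0 := by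
          intro h
          rw [h] at hqu
          omega
        refine ⟨a + 1, b, u' + u, v' + v, ?_, ?_, by ring, by omega⟩
        · exact mem_nM_succ.mpr ⟨u', ⟨hu', hu'0⟩, u, hu, rfl⟩
        · exact add_mem_nM G.hnum₂ b v' hv' v hv

end GluingLemmas

/-- for a specific gluing `S` of `S₁` and `S₂`,
`ord_S(qx) = ord_{S₁}(x)` for every `x ∈ S₁`. -/
theorem stmt12 (G : Gluing) (hG : G.Specific) :
    ∀ x ∈ G.S₁, ordS G.S (G.q * x) = ordS G.S₁ x := by
  intro x hx
  have hqpos := G.q_pos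
  refine Nat.le_antisymm ?_ (le_ordS (G.q_mul_mem_nM _ _ (mem_nM_ordS hx)))
  have hqx : G.q * x ∈ G.S := G.mem_S_iff.mpr ⟨x, hx, 0, AddSubmonoid.zero_mem _, by ring⟩
  obtain ⟨a, b, u, v, hu, hv, heq, hab⟩ := G.nM_S_decompose _ _ (mem_nM_ordS hqx)
  -- q ∣ v
  have hule : G.q * u ≤ G.q * x := by omega
  have hdvd : G.q ∣ G.p * v := by
    have h1 : G.p * v = G.q * x - G.q * u := by omega
    rw [h1]
    exact Nat.dvd_sub (Dvd.intro x rfl) (Dvd.intro u rfl)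
  have hcop : Nat.Coprime G.q G.p := Nat.Coprime.symm G.hpq
  obtain ⟨w, rfl⟩ := hcop.dvd_of_dvd_mul_left hdvd
  have hxeq : x = u + G.p * w := by
    have h1 : G.q * x = G.q * (u + G.p * w) := by rw [heq]; ring
    exact Nat.eq_of_mul_eq_mul_left hqpos h1
  have hb : b ≤ ordS G.S₂ (G.q * w) := le_ordS hv
  have h1 : ordS G.S₂ (G.q * w) ≤ w * (ordS G.S₂ G.q + lS G.S₂ G.q) :=
    ordS_mul_le G.hnum₂ G.hq w
  have h2 : w * (ordS G.S₂ G.q + lS G.S₂ G.q) ≤ w * ordS G.S₁ G.p :=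
    Nat.mul_le_mul_left w hG
  have h3 : w * ordS G.S₁ G.p ≤ ordS G.S₁ (G.p * w) := ord_mul_ge G.hnum₁ G.hp w
  have ha : a ≤ ordS G.S₁ u := le_ordS hu
  have h4 : ordS G.S₁ u + ordS G.S₁ (G.p * w) ≤ ordS G.S₁ (u + G.p * w) :=
    ordS_superadd G.hnum₁ (nM_subset G.hnum₁ a hu) (mul_mem_S G.hnum₁ G.hp w)
  have h5 : ordS G.S₁ (u + G.p * w) = ordS G.S₁ x := by rw [← hxeq]
  omega
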